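/- In the (f,k)-FT game over a universe C with |C| = f + k, the collection 𝒫 = all k-element subsets of C has no proper FT-certificate: for every P ∈ 𝒫, setting F = C \ P (so |F| = f) kills every P' ∈ 𝒫 with P' ≠ P while P ∩ F = ∅. Consequently any sub-collection 𝒫' ⊆ 𝒫 that is an FT-certificate of 𝒫 must equal 𝒫, and hence have size binom(f+k, k). -/
import Mathlib


open Finset

/-- An FT-certificate of a collection of subsets of `C` with fault budget `f`. -/
def IsFTCertificate {C : Type*} [DecidableEq C] (f : ℕ)
    (Psall Ps' : Finset (Finset C)) : Prop :=
  ∀ F : Finset C, F.card ≤ f →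
    (∃ P ∈ Psall, P ∩ F = ∅) → ∃ P' ∈ Ps', P' ∩ F = ∅

/-- The collection of all k-subsets of a universe of size f+k has no proper
FT-certificate. -/
theorem forcing_bob {C : Type*} [Fintype C] [DecidableEq C] (f k : ℕ)
    (hC : Fintype.card C = f + k)
    (Ps' : Finset (Finset C))
    (hsub : Ps' ⊆ Finset.powersetCard k Finset.univ)
    (hcert : IsFTCertificate f (Finset.powersetCard k Finset.univ) Ps') :
    Ps' = Finset.powersetCard k Finset.univ ∧ Ps'.card = Nat.choose (f + k) k := by
  have heq : Ps' = Finset.powersetCard k Finset.univ := by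
    apply Finset.Subset.antisymm hsub
    intro P hP
    have hPk : P.card = k := (Finset.mem_powersetCard.mp hP).2
    have hFcard : Pᶜ.card ≤ f := by
      have := Finset.card_compl P
      omega
    obtain ⟨P', hP'mem, hP'F⟩ := hcert Pᶜ hFcard ⟨P, hP, by
      simp [Finset.inter_compl]⟩
    have hP'k : P'.card = k := (Finset.mem_powersetCard.mp (hsub hP'mem)).2
    have hP'sub : P' ⊆ P := by
      intro x hx
      by_contra hxP
      have : x ∈ P' ∩ Pᶜ := Finset.mem_inter.mpr ⟨hx, Finset.mem_compl.mpr hxP⟩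
      simp [hP'F] at this
    have : P' = P := Finset.eq_of_subset_of_card_le hP'sub (by omega)
    rwa [this] at hP'mem
  refine ⟨heq, ?_⟩
  rw [heq, Finset.card_powersetCard, Finset.card_univ, hC]
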